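/- Collapse at order 1: suppose the sequence G^0, G^1, … (with associated identifier sets G̃^0, G̃^1, …) satisfies G̃^i ≃ G̃^{i_1} for all i ≥ i_1. Define Ĝ^{i_1} = G^{i_1} and Ĝ^{i+1} = T_{G̃^{i_1}[i_1/i_1−1]}(Ĝ^i), so the state-set of Ĝ^i remains constant. Then there exists i_0 such that the following are equivalent for every word w: (1) the run g^{i_1}_{(q,Q′)} —w→ Q_1 with Q_1 ⊆ Q_f exists in Ĝ^i for some i; (2) the run g^{i_1}_{(q,Q′)} —w→ Q_2 with Q_2 ⊆ Q_f exists in Ĝ^{i_0}; (3) the run g^{i′}_{(q,Q′)} —w→ Q_3 with Q_3 ⊆ Q_f exists in G^{i′} for some i′. -/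

import Mathlib

namespace Order2

/-! Order-2 APDSs, 2-store multi-automata (in pooled form) and the
backwards-reachability saturation construction of Hague–Ong. -/

/-- 1-stores -/
abbrev Store1 (α : Type) := List α

/-- 2-stores: the topmost 1-store together with the rest (hence nonempty) -/
abbrev Store2 (α : Type) := List α × List (List α)

/-- the operations of `O_2` -/
inductive Op2 (α : Type) where
  | pushw : List α → Op2 α
  | push2 : Op2 α
  | pop2 : Op2 α

/-- partial application of an operation to a 2-store -/
def Op2.apply {α : Type} : Op2 α → Store2 α → Option (Store2 α)
  | .pushw w, s =>
      match s.1 with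
      | [] => none
      | _ :: t => some (w ++ t, s.2)
  | .push2, s => some (s.1, s.1 :: s.2)
  | .pop2, s =>
      match s.2 with
      | [] => none
      | r :: rs => some (r, rs)

def top1 {α : Type} (s : Store2 α) : Option α := s.1.head?

/-- configurations; `none` is the undefined store `∇` -/
abbrev Conf (P α : Type) := P × Option (Store2 α)

/-- commands of an order-2 APDS -/
abbrev Cmds (P α : Type) := Set (P × α × Set (Op2 α × P))

/-- `⟨p,γ⟩ ↪ C` -/
def ConfStep {P α : Type} (D : Cmds P α) (c : Conf P α) (C : Set (Conf P α)) : Prop :=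
  ∃ p γ a OP, c = (p, some γ) ∧ (p, a, OP) ∈ D ∧ top1 γ = some a ∧
    C = {c' | ∃ o p' δ, (o, p') ∈ OP ∧ Op2.apply o γ = some δ ∧ c' = (p', some δ)}
      ∪ {c' | (∃ o p', (o, p') ∈ OP ∧ Op2.apply o γ = none) ∧ c' = (p, none)}

/-- `↪` extended to sets of configurations -/
def SetStep {P α : Type} (D : Cmds P α) (X Y : Set (Conf P α)) : Prop :=
  ∃ c C C', ConfStep D c C ∧ c ∉ C' ∧ X = insert c C' ∧ Y = C' ∪ C

/-- `Pre*(C_Init)` -/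
def PreStar {P α : Type} (D : Cmds P α) (CI : Set (Conf P α)) : Set (Conf P α) :=
  {c | ∃ C, Relation.ReflTransGen (SetStep D) {c} C ∧ C ⊆ CI}

/-- identifiers `G̃_{(q₁,Q₂)}` of the new order-2 transitions -/
abbrev Ident (Q : Type) := Q × Set Q

/-- the pool of order-1 states: the states `σB` of the disjoint union of the automata of
`B` (the 1-store automata of `A_0` together with the `B^a_1`), plus one state
`g^i_{(q₁,Q₂)}` for every stage `i` and identifier -/
abbrev GQ (σB Q : Type) := σB ⊕ (ℕ × Ident Q)

/-- the elements `α_t` of the element sets: a reference `θ` to an automaton of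
`B ∪ G̃^{i-1}` (given by its initial state in the pool), or a triple `(a, push_w, θ)` -/
inductive Elem (α σB Q : Type) where
  | ref : GQ σB Q → Elem α σB Q
  | push : α → List α → GQ σB Q → Elem α σB Q

/-- order-1 (pool) transition relations -/
abbrev Trans1 (α σB Q : Type) := Set (GQ σB Q × α × Set (GQ σB Q))
/-- order-2 transition relations (labels are initial states in the pool) -/
abbrev Trans2 (α σB Q : Type) := Set (Q × GQ σB Q × Set Q)

/-- one alternating step of the order-1 (pool) automaton -/
def wstep {α σB Q : Type} (Δ : Trans1 α σB Q) (a : α) (S S' : Set (GQ σB Q)) : Prop :=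
  ∃ f : GQ σB Q → Set (GQ σB Q),
    (∀ g ∈ S, (g, a, f g) ∈ Δ) ∧ S' = ⋃ g ∈ S, f g

/-- alternating run of the order-1 automaton over a 1-store -/
inductive wrun {α σB Q : Type} (Δ : Trans1 α σB Q) :
    Store1 α → Set (GQ σB Q) → Set (GQ σB Q) → Prop
  | nil (S : Set (GQ σB Q)) : wrun Δ [] S S
  | cons {a : α} {w : Store1 α} {S S1 S2 : Set (GQ σB Q)} :
      wstep Δ a S S1 → wrun Δ w S1 S2 → wrun Δ (a :: w) S S2

/-- acceptance of a 1-store from the pool state `g`, w.r.t. final states `F` -/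
def Acc1 {α σB Q : Type} (Δ : Trans1 α σB Q) (F : Set (GQ σB Q)) (g : GQ σB Q)
    (w : Store1 α) : Prop :=
  ∃ S, wrun Δ w {g} S ∧ S ⊆ F

/-- one alternating order-2 step reading the 1-store `γ` (each label must accept `γ`) -/
def step2 {α σB Q : Type} (Δ1 : Trans1 α σB Q) (F1 : Set (GQ σB Q)) (Δ2 : Trans2 α σB Q)
    (γ : Store1 α) (S S' : Set Q) : Prop :=
  ∃ f : Q → GQ σB Q × Set Q,
    (∀ q ∈ S, (q, f q) ∈ Δ2 ∧ Acc1 Δ1 F1 (f q).1 γ) ∧ S' = ⋃ q ∈ S, (f q).2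

/-- alternating order-2 run over a word of 1-stores -/
inductive run2 {α σB Q : Type} (Δ1 : Trans1 α σB Q) (F1 : Set (GQ σB Q))
    (Δ2 : Trans2 α σB Q) : List (Store1 α) → Set Q → Set Q → Prop
  | nil (S : Set Q) : run2 Δ1 F1 Δ2 [] S S
  | cons {γ : Store1 α} {w : List (Store1 α)} {S S1 S2 : Set Q} :
      step2 Δ1 F1 Δ2 γ S S1 → run2 Δ1 F1 Δ2 w S1 S2 → run2 Δ1 F1 Δ2 (γ :: w) S S2

/-- one order-2 step recording only the set `θ̃` of labels used -/
def lstep {α σB Q : Type} (Δ2 : Trans2 α σB Q) (S : Set Q) (θ : Set (GQ σB Q))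
    (S' : Set Q) : Prop :=
  ∃ f : Q → GQ σB Q × Set Q,
    (∀ q ∈ S, (q, f q) ∈ Δ2) ∧ θ = (fun q => (f q).1) '' S ∧ S' = ⋃ q ∈ S, (f q).2

/-- The fixed data of the construction: an order-2 APDS `D` over control states `P`, and
the 2-store multi-automaton `A_0` presented in pooled form:  order-2 states `Q` with
initial states `qinit p`, final states `F2`, the distinguished states `q*_f` (`qfstar`)
and `q^ε_f` (`qfeps`), `∇`-transitions `nabla`;  order-2 transitions `Δ2B` labelled by
(the initial states of) 1-store automata whose disjoint union (together with the `B^a_1`,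
with initial states `ba a`) is the order-1 automaton `G^0 = (Δ1B, F1B)` over states `σB`. -/
structure Setup (α P Q σB : Type) where
  D : Cmds P α
  qinit : P → Q
  F2 : Set Q
  qfstar : Q
  qfeps : Q
  nabla : Set Q
  Δ2B : Set (Q × σB × Set Q)
  Δ1B : Set (σB × α × Set σB)
  F1B : Set σB
  ba : α → σB

/-- the base order-1 transitions, lifted to the pool -/
def liftB {α σB Q : Type} (Δ : Set (σB × α × Set σB)) : Trans1 α σB Q :=
  {t | ∃ s a T, (s, a, T) ∈ Δ ∧ t = (Sum.inl s, a, Sum.inl '' T)}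

/-- the (fixed) set of final order-1 states -/
def F1 {α P Q σB : Type} (su : Setup α P Q σB) : Set (GQ σB Q) :=
  Sum.inl '' su.F1B

/-- the data of stage `i` of the construction: the set `gdom` of identifiers present in
`A_i`, the recipes `G̃^i` (`recipes`), and the order-1 pool automaton `G^i` (`Δ1`) -/
structure Stage (α σB Q : Type) where
  gdom : Set (Ident Q)
  recipes : Ident Q → Set (Set (Elem α σB Q))
  Δ1 : Trans1 α σB Q

/-- the order-2 transitions of `A_i`: the `B`-labelled transitions of `A_0` plus one
transition `q₁ —G^i_{(q₁,Q₂)}→ Q₂` for each identifier present -/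
def Δ2At {α P Q σB : Type} (su : Setup α P Q σB) (i : ℕ) (dom : Set (Ident Q)) :
    Trans2 α σB Q :=
  {t | ∃ q s T, (q, s, T) ∈ su.Δ2B ∧ t = (q, Sum.inl s, T)} ∪
  {t | ∃ id ∈ dom, t = (id.1, Sum.inr (i, id), id.2)}

/-- the clause of condition (2) for a single pair `(o, p^{k_t})` of a command with top
symbol `a` and source control state `p` -/
def Clause {α P Q σB : Type} (su : Setup α P Q σB) (i : ℕ) (st : Stage α σB Q)
    (a : α) (p : P) (op : Op2 α × P) (Qt : Set Q) (Selt : Set (Elem α σB Q)) : Prop :=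
  match op.1 with
  | .push2 =>
      ∃ θ1 θ2 Q', lstep (Δ2At su i st.gdom) {su.qinit op.2} θ1 Q' ∧
        lstep (Δ2At su i st.gdom) Q' θ2 Qt ∧
        Selt = insert (Elem.ref (Sum.inl (su.ba a))) (Elem.ref '' θ1 ∪ Elem.ref '' θ2)
  | .pop2 =>
      Selt = {Elem.ref (Sum.inl (su.ba a))} ∧
        (Qt = {su.qinit op.2} ∨ (su.qinit p ∈ su.nabla ∧ Qt = {su.qfeps}))
  | .pushw w =>
      ∃ θ T, (su.qinit op.2, θ, T) ∈ Δ2At su i st.gdom ∧ Qt = T ∧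
        Selt = {Elem.push a w θ}

/-- condition (2): the element sets `S = S₁ ∪ … ∪ S_m` contributed to the identifier
`G̃^{i+1}_{(q,Qs)}` by the commands of the APDS, given the runs of `A_i` -/
def NewRec {α P Q σB : Type} (su : Setup α P Q σB) (i : ℕ) (st : Stage α σB Q)
    (q : Q) (Qs : Set Q) : Set (Set (Elem α σB Q)) :=
  {S | ∃ p a OP, (p, a, OP) ∈ su.D ∧ q = su.qinit p ∧
        ∃ f : Op2 α × P → Set Q × Set (Elem α σB Q),
          (∀ op ∈ OP, Clause su i st a p op (f op).1 (f op).2) ∧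
          Qs = ⋃ op ∈ OP, (f op).1 ∧ S = ⋃ op ∈ OP, (f op).2}

/-- the identifiers of `A_{i+1}`: those already present in `A_i` together with those
introduced by condition (2) -/
def NewDom {α P Q σB : Type} (su : Setup α P Q σB) (i : ℕ) (st : Stage α σB Q) :
    Set (Ident Q) :=
  st.gdom ∪ {id | ∃ S, S ∈ NewRec su i st id.1 id.2}

/-- the requirement on an element `α_t` in the definition of `T_{G̃}`: for a reference
`θ`, a transition of `G^i`; for `(a, push_w, θ)`, the letter must be `a` and `G^i` must
have a run over `w` from `q^θ` -/
def ElemClause {α σB Q : Type} (Δ1 : Trans1 α σB Q) (b : α) :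
    Elem α σB Q → Set (GQ σB Q) → Prop
  | .ref θ, T => (θ, b, T) ∈ Δ1
  | .push a w θ, T => b = a ∧ wrun Δ1 w {θ} T

/-- `T_{G̃^j}` : the update of the order-1 pool automaton.  The state `g^j_{(q₁,Q₂)}`
inherits the transitions of `g^{j-1}_{(q₁,Q₂)}`, and receives a new transition
`g^j_{(q₁,Q₂)} —b→ Q₁ ∪ … ∪ Q_r` for every element set `S = {α₁,…,α_r}` of the recipe,
with the `Q_t` given by `ElemClause`; all previous transitions are kept. -/
def TG {α σB Q : Type} (j : ℕ) (dom : Set (Ident Q))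
    (R : Ident Q → Set (Set (Elem α σB Q))) (Δ1 : Trans1 α σB Q) : Trans1 α σB Q :=
  Δ1 ∪
  {t | ∃ id ∈ dom, ∃ a T, (Sum.inr (j - 1, id), a, T) ∈ Δ1 ∧
        t = (Sum.inr (j, id), a, T)} ∪
  {t | ∃ id ∈ dom, ∃ (b : α) (S : Set (Elem α σB Q)) (f : Elem α σB Q → Set (GQ σB Q)),
        S ∈ R id ∧ (∀ e ∈ S, ElemClause Δ1 b e (f e)) ∧
        t = (Sum.inr (j, id), b, ⋃ e ∈ S, f e)}

/-- `T_D` : one step of the saturation, producing the data of `A_{i+1}` from `A_i` -/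
def TD {α P Q σB : Type} (su : Setup α P Q σB) (i : ℕ) (st : Stage α σB Q) :
    Stage α σB Q :=
  { gdom := NewDom su i st
    recipes := fun id => NewRec su i st id.1 id.2
    Δ1 := TG (i + 1) (NewDom su i st) (fun id => NewRec su i st id.1 id.2) st.Δ1 }

/-- the sequence of stages: `A_0` (no identifiers, `G^0` the disjoint union of `B`),
then `A_{i+1} = T_D(A_i)` -/
def stage {α P Q σB : Type} (su : Setup α P Q σB) : ℕ → Stage α σB Q
  | 0 => ⟨∅, fun _ => ∅, liftB su.Δ1B⟩
  | i + 1 => TD su i (stage su i)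

/-- acceptance of a 2-store from the order-2 state `q` in `A_i` -/
def Acc2 {α P Q σB : Type} (su : Setup α P Q σB) (i : ℕ) (q : Q) (s : Store2 α) : Prop :=
  ∃ S, run2 (stage su i).Δ1 (F1 su) (Δ2At su i (stage su i).gdom) (s.1 :: s.2) {q} S ∧
    S ⊆ su.F2

/-- `L(A_i)` as a set of configurations (with `⟨p,∇⟩ ∈ L(A_i)` iff `q^p —∇→ {q^ε_f}`) -/
def LangA {α P Q σB : Type} (su : Setup α P Q σB) (i : ℕ) : Set (Conf P α) :=
  {c | (∃ s, c.2 = some s ∧ Acc2 su i (su.qinit c.1) s) ∨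
       (c.2 = none ∧ su.qinit c.1 ∈ su.nabla)}

/-- well-formedness of `A_0`: `q^ε_f` is final with no outgoing transitions, the initial
states are pairwise distinct, non-final, with no incoming transitions; all 2-stores are
accepted from `q*_f`; and `B^a_1` (with initial state `ba a`) accepts exactly the
1-stores with `top₁ = a` -/
def Setup.WF {α P Q σB : Type} (su : Setup α P Q σB) : Prop :=
  su.qfeps ∈ su.F2 ∧
  (∀ x T, (su.qfeps, x, T) ∉ su.Δ2B) ∧
  Function.Injective su.qinit ∧
  (∀ p, su.qinit p ∉ su.F2) ∧
  (∀ p, su.qinit p ≠ su.qfeps) ∧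
  (∀ q x T p, (q, x, T) ∈ su.Δ2B → su.qinit p ∉ T) ∧
  (∀ s : Store2 α, Acc2 su 0 su.qfstar s) ∧
  (∀ (a : α) (w : Store1 α),
      Acc1 (liftB su.Δ1B) (F1 su) (Sum.inl (su.ba a)) w ↔ w.head? = some a)

/-- the substitution `[j/i]` on pool states: replace the identifier superscript `i`
by `j` -/
def substGQ {σB Q : Type} (j i : ℕ) : GQ σB Q → GQ σB Q
  | .inl s => .inl s
  | .inr (i', id) => .inr (if i' = i then j else i', id)

/-- `[j/i]` on elements -/
def substElem {α σB Q : Type} (j i : ℕ) : Elem α σB Q → Elem α σB Q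
  | .ref θ => .ref (substGQ j i θ)
  | .push a w θ => .push a w (substGQ j i θ)

/-- `[j/i]` on element sets -/
def substS {α σB Q : Type} (j i : ℕ) (S : Set (Elem α σB Q)) : Set (Elem α σB Q) :=
  substElem j i '' S

/-- `G̃^i ≃ G̃^{i₁}` : the two stages have identifiers for exactly the same pairs, and
corresponding recipes agree up to the index substitution (`≲` in both directions) -/
def SimeqAt {α P Q σB : Type} (su : Setup α P Q σB) (i1 i : ℕ) : Prop :=
  (stage su i).gdom = (stage su i1).gdom ∧
  ∀ id ∈ (stage su i).gdom,
    (∀ S ∈ (stage su i).recipes id, substS (i1 - 1) (i - 1) S ∈ (stage su i1).recipes id) ∧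
    (∀ S ∈ (stage su i1).recipes id, substS (i - 1) (i1 - 1) S ∈ (stage su i).recipes id)

/-- the fixed-state sequence `Ĝ^{i₁}, Ĝ^{i₁+1}, …` (indexed here by the offset from
`i₁`): `Ĝ^{i₁} = G^{i₁}` and `Ĝ^{i+1} = T_{G̃^{i₁}[i₁/i₁-1]}(Ĝ^i)`, so that no new
states are added -/
def hatSeq {α P Q σB : Type} (su : Setup α P Q σB) (i1 : ℕ) : ℕ → Trans1 α σB Q
  | 0 => (stage su i1).Δ1
  | m + 1 =>
      TG i1 (stage su i1).gdom
        (fun id => substS i1 (i1 - 1) '' (stage su i1).recipes id)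
        (hatSeq su i1 m)

end Order2

namespace Order2

section Aux

open Classical

variable {α P Q σB : Type}

/-- weight of a pool state -/
def wt : GQ σB Q → ℕ
  | .inl _ => 0
  | .inr (k, _) => k + 1

/-- the reference of an element -/
def refOf : Elem α σB Q → GQ σB Q
  | .ref θ => θ
  | .push _ _ θ => θ

lemma wrun_mono {Δ Δ' : Trans1 α σB Q} (h : Δ ⊆ Δ') {w S T} (hr : wrun Δ w S T) :
    wrun Δ' w S T := by
  induction hr with
  | nil S => exact .nil S
  | cons hs _ ih =>
    obtain ⟨f, hf, rfl⟩ := hs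
    exact .cons ⟨f, fun g hg => h (hf g hg), rfl⟩ ih

lemma TG_subset {j : ℕ} {dom : Set (Ident Q)} {R : Ident Q → Set (Set (Elem α σB Q))}
    {Δ1 : Trans1 α σB Q} : Δ1 ⊆ TG j dom R Δ1 :=
  fun _ ht => Or.inl (Or.inl ht)

lemma stage_mono_Δ1 (su : Setup α P Q σB) {i j : ℕ} (h : i ≤ j) :
    (stage su i).Δ1 ⊆ (stage su j).Δ1 := by
  induction j, h using Nat.le_induction with
  | base => exact subset_rfl
  | succ j hj ih => exact ih.trans TG_subset

lemma stage_mono_gdom (su : Setup α P Q σB) {i j : ℕ} (h : i ≤ j) :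
    (stage su i).gdom ⊆ (stage su j).gdom := by
  induction j, h using Nat.le_induction with
  | base => exact subset_rfl
  | succ j hj ih => exact ih.trans (fun id hid => Or.inl hid)

lemma hat_mono (su : Setup α P Q σB) (i1 : ℕ) {m m' : ℕ} (h : m ≤ m') :
    hatSeq su i1 m ⊆ hatSeq su i1 m' := by
  induction m', h using Nat.le_induction with
  | base => exact subset_rfl
  | succ m' hm ih => exact ih.trans TG_subset

lemma wrun_bound {Δ : Trans1 α σB Q} {B : ℕ}
    (hΔ : ∀ g a T, (g, a, T) ∈ Δ → ∀ x ∈ T, wt x ≤ B) {w S T} (h : wrun Δ w S T) :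
    (∀ x ∈ S, wt x ≤ B) → ∀ x ∈ T, wt x ≤ B := by
  induction h with
  | nil S => exact id
  | cons hs _ ih =>
    intro hS
    apply ih
    obtain ⟨f, hf, rfl⟩ := hs
    intro x hx
    simp only [Set.mem_iUnion] at hx
    obtain ⟨g, hg, hxg⟩ := hx
    exact hΔ _ _ _ (hf g hg) x hxg

lemma F1_inl {su : Setup α P Q σB} {x : GQ σB Q} (h : x ∈ F1 su) : ∃ s, x = Sum.inl s := by
  obtain ⟨s, _, rfl⟩ := h; exact ⟨s, rfl⟩

/-- uniformize finitely many eventually-true properties -/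
lemma fmax {X : Type} {s : Set X} (hs : s.Finite) {R : X → ℕ → Prop}
    (h : ∀ x ∈ s, ∃ n, ∀ k, n ≤ k → R x k) : ∃ N, ∀ x ∈ s, ∀ k, N ≤ k → R x k := by
  classical
  choose! g hg using h
  obtain ⟨N, hN⟩ := (hs.image g).bddAbove
  refine ⟨N, fun x hx k hk => hg x hx k (le_trans (hN ⟨x, hx, rfl⟩) hk)⟩

lemma wt_fin [Finite σB] [Finite Q] (c : ℕ) : {x : GQ σB Q | wt x ≤ c}.Finite := by
  have : {x : GQ σB Q | wt x ≤ c} ⊆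
      Sum.inl '' (Set.univ : Set σB) ∪
        Sum.inr '' ((Set.Iic c : Set ℕ) ×ˢ (Set.univ : Set (Ident Q))) := by
    intro x hx
    match x with
    | .inl s => exact Or.inl ⟨s, trivial, rfl⟩
    | .inr (k, id) =>
      refine Or.inr ⟨(k, id), ⟨?_, trivial⟩, rfl⟩
      have hk : k + 1 ≤ c := by simpa [wt] using hx
      simpa using by omega
  exact Set.Finite.subset (((Set.finite_univ).image _).union
    (((Set.finite_Iic c).prod Set.finite_univ).image _)) this

end Aux
section Struct

variable {α P Q σB : Type}

lemma Δ2At_label {su : Setup α P Q σB} {i : ℕ} {dom : Set (Ident Q)} {q : Q}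
    {θ : GQ σB Q} {T : Set Q} (h : (q, θ, T) ∈ Δ2At su i dom) :
    (∃ s, θ = Sum.inl s) ∨ ∃ id', θ = Sum.inr (i, id') := by
  rcases h with h | h
  · obtain ⟨q', s, T', -, he⟩ := h
    simp only [Prod.ext_iff] at he
    exact Or.inl ⟨s, he.2.1⟩
  · obtain ⟨id, -, he⟩ := h
    simp only [Prod.ext_iff] at he
    exact Or.inr ⟨id, he.2.1⟩

lemma lstep_label {Δ2 : Trans2 α σB Q} {S : Set Q} {θs : Set (GQ σB Q)} {S'}
    (h : lstep Δ2 S θs S') : ∀ θ ∈ θs, ∃ q T, (q, θ, T) ∈ Δ2 := by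
  obtain ⟨f, hf, rfl, -⟩ := h
  rintro θ ⟨q, hq, rfl⟩
  exact ⟨q, (f q).2, hf q hq⟩

lemma rec_ref {su : Setup α P Q σB} {i : ℕ} {st : Stage α σB Q}
    {S : Set (Elem α σB Q)} {q Qs} (h : S ∈ NewRec su i st q Qs) :
    ∀ e ∈ S, (∃ s, refOf e = Sum.inl s) ∨ ∃ id', refOf e = Sum.inr (i, id') := by
  obtain ⟨p, a, OP, hD, -, f, hcl, -, rfl⟩ := h
  intro e he
  simp only [Set.mem_iUnion] at he
  obtain ⟨op, hop, he⟩ := he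
  have hc := hcl op hop
  obtain ⟨o, pk⟩ := op
  cases o with
  | push2 =>
    obtain ⟨θ1, θ2, Q', h1, h2, heq⟩ := hc
    rw [heq] at he
    simp only [Set.mem_insert_iff, Set.mem_union, Set.mem_image] at he
    rcases he with rfl | (⟨θ, hθ, rfl⟩ | ⟨θ, hθ, rfl⟩)
    · exact Or.inl ⟨su.ba a, rfl⟩
    · obtain ⟨q', T, hm⟩ := lstep_label h1 θ hθ
      exact Δ2At_label hm
    · obtain ⟨q', T, hm⟩ := lstep_label h2 θ hθ
      exact Δ2At_label hm
  | pop2 =>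
    obtain ⟨heq, -⟩ := hc
    rw [heq] at he
    rcases he with rfl
    exact Or.inl ⟨su.ba a, rfl⟩
  | pushw w =>
    obtain ⟨θ, T, hm, -, heq⟩ := hc
    rw [heq] at he
    rcases he with rfl
    exact Δ2At_label hm

lemma rec_fin [Finite Q] {su : Setup α P Q σB}
    (hOPfin : ∀ x ∈ su.D, x.2.2.Finite) {i : ℕ} {st : Stage α σB Q}
    {S : Set (Elem α σB Q)} {q Qs} (h : S ∈ NewRec su i st q Qs) : S.Finite := by
  obtain ⟨p, a, OP, hD, -, f, hcl, -, rfl⟩ := h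
  refine Set.Finite.biUnion (hOPfin _ hD) ?_
  intro op hop
  have hc := hcl op hop
  obtain ⟨o, pk⟩ := op
  cases o with
  | push2 =>
    obtain ⟨θ1, θ2, Q', h1, h2, heq⟩ := hc
    rw [heq]
    obtain ⟨f1, -, rfl, -⟩ := h1
    obtain ⟨f2, -, rfl, -⟩ := h2
    exact ((((Set.toFinite _).image _).image _).union
      (((Set.toFinite _).image _).image _)).insert _
  | pop2 =>
    obtain ⟨heq, -⟩ := hc
    rw [heq]; exact Set.finite_singleton _
  | pushw w =>
    obtain ⟨θ, T, hm, -, heq⟩ := hc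
    rw [heq]; exact Set.finite_singleton _

lemma L1a (su : Setup α P Q σB) :
    ∀ i s a T, (Sum.inl s, a, T) ∈ (stage su i).Δ1 →
      (Sum.inl s, a, T) ∈ liftB su.Δ1B ∧ ∀ x ∈ T, ∃ s', x = Sum.inl s' := by
  intro i
  induction i with
  | zero =>
    intro s a T h
    refine ⟨h, ?_⟩
    obtain ⟨s0, a0, T0, -, he⟩ := h
    simp only [Prod.ext_iff] at he
    obtain ⟨-, -, hT⟩ := he
    rw [hT]
    rintro x ⟨s', -, rfl⟩
    exact ⟨s', rfl⟩
  | succ i ih =>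
    intro s a T h
    rcases h with (h | h) | h
    · exact ih s a T h
    · obtain ⟨id, -, a', T', -, he⟩ := h
      exact absurd (congrArg Prod.fst he) (by simp)
    · obtain ⟨id, -, b, S, f, -, -, he⟩ := h
      exact absurd (congrArg Prod.fst he) (by simp)

lemma L2a (su : Setup α P Q σB) :
    ∀ i k id a T, (Sum.inr (k, id), a, T) ∈ (stage su i).Δ1 →
      1 ≤ k ∧ k ≤ i ∧ id ∈ (stage su k).gdom ∧
      (Sum.inr (k, id), a, T) ∈ (stage su k).Δ1 ∧ ∀ x ∈ T, wt x ≤ k := by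
  intro i
  induction i with
  | zero =>
    intro k id a T h
    obtain ⟨s0, a0, T0, -, he⟩ := h
    exact absurd (congrArg Prod.fst he) (by simp)
  | succ i ih =>
    intro k id a T h
    have htb : ∀ g a' T', (g, a', T') ∈ (stage su i).Δ1 → ∀ x ∈ T', wt x ≤ i := by
      intro g a' T' hm x hx
      match g with
      | .inl s =>
        obtain ⟨s', rfl⟩ := (L1a su i s a' T' hm).2 x hx
        simp [wt]
      | .inr (c, id') =>
        obtain ⟨-, hci, -, -, hb⟩ := ih c id' a' T' hm
        exact le_trans (hb x hx) hci
    have hmem : (Sum.inr (k, id), a, T) ∈ (stage su (i+1)).Δ1 := h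
    rcases h with (h | h) | h
    · obtain ⟨h1, h2, h3, h4, h5⟩ := ih k id a T h
      exact ⟨h1, h2.trans (Nat.le_succ i), h3, h4, h5⟩
    · obtain ⟨id', hdom, a', T', hprev, he⟩ := h
      simp only [Prod.ext_iff, Sum.inr.injEq] at he
      obtain ⟨hkid, rfl, rfl⟩ := he
      obtain ⟨rfl, rfl⟩ : k = i + 1 ∧ id = id' :=
        ⟨hkid.1, Prod.ext hkid.2.1 hkid.2.2⟩
      have hp : (Sum.inr (i, id), a, T) ∈ (stage su i).Δ1 := by simpa using hprev
      refine ⟨by omega, le_refl _, hdom, hmem, ?_⟩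
      intro x hx
      exact le_trans (htb _ _ _ hp x hx) (Nat.le_succ i)
    · obtain ⟨id', hdom, b, S, f, hS, hcl, he⟩ := h
      simp only [Prod.ext_iff, Sum.inr.injEq] at he
      obtain ⟨hkid, rfl, rfl⟩ := he
      obtain ⟨rfl, rfl⟩ : k = i + 1 ∧ id = id' :=
        ⟨hkid.1, Prod.ext hkid.2.1 hkid.2.2⟩
      refine ⟨by omega, le_refl _, hdom, hmem, ?_⟩
      intro x hx
      simp only [Set.mem_iUnion] at hx
      obtain ⟨e, heS, hx⟩ := hx
      have hrb : wt (refOf e) ≤ i + 1 := by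
        rcases rec_ref hS e heS with ⟨s, hr⟩ | ⟨id'', hr⟩ <;> rw [hr] <;> simp [wt]
      have hc := hcl e heS
      match e with
      | .ref θ =>
        exact le_trans (htb _ _ _ hc x hx) (Nat.le_succ i)
      | .push a' w' θ =>
        obtain ⟨-, hw⟩ := hc
        refine wrun_bound (B := i + 1)
          (fun g a'' T'' hm y hy => le_trans (htb g a'' T'' hm y hy) (Nat.le_succ i))
          hw ?_ x hx
        intro y hy
        rcases hy with rfl
        exact hrb

end Struct
section Hat

variable {α P Q σB : Type}

lemma refOf_subst (j i : ℕ) (e : Elem α σB Q) :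
    refOf (substElem j i e) = substGQ j i (refOf e) := by
  cases e <;> rfl

lemma hat_rec_ref {su : Setup α P Q σB} {i1 : ℕ} {S₀ : Set (Elem α σB Q)}
    {id : Ident Q} (h : S₀ ∈ (stage su i1).recipes id) :
    ∀ e ∈ S₀, (∃ s, refOf e = Sum.inl s) ∨ ∃ id', refOf e = Sum.inr (i1 - 1, id') := by
  match i1 with
  | 0 => exact absurd h (by simp [stage])
  | n + 1 =>
    have h' : S₀ ∈ NewRec su n (stage su n) id.1 id.2 := h
    simpa using rec_ref h'

lemma L1H (su : Setup α P Q σB) (i1 : ℕ) :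
    ∀ m s a T, (Sum.inl s, a, T) ∈ hatSeq su i1 m →
      (Sum.inl s, a, T) ∈ liftB su.Δ1B ∧ ∀ x ∈ T, ∃ s', x = Sum.inl s' := by
  intro m
  induction m with
  | zero => exact fun s a T h => L1a su i1 s a T h
  | succ m ih =>
    intro s a T h
    rcases h with (h | h) | h
    · exact ih s a T h
    · obtain ⟨id, -, a', T', -, he⟩ := h
      exact absurd (congrArg Prod.fst he) (by simp)
    · obtain ⟨id, -, b, S, f, -, -, he⟩ := h
      exact absurd (congrArg Prod.fst he) (by simp)

lemma L2H (su : Setup α P Q σB) (i1 : ℕ) :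
    ∀ m k id a T, (Sum.inr (k, id), a, T) ∈ hatSeq su i1 m →
      1 ≤ k ∧ k ≤ i1 ∧ (k < i1 → (Sum.inr (k, id), a, T) ∈ (stage su k).Δ1) ∧
      (k = i1 → id ∈ (stage su i1).gdom) ∧ ∀ x ∈ T, wt x ≤ i1 + 1 := by
  intro m
  induction m with
  | zero =>
    intro k id a T h
    obtain ⟨h1, h2, h3, h4, h5⟩ := L2a su i1 k id a T h
    exact ⟨h1, h2, fun _ => h4, fun hk => hk ▸ h3,
      fun x hx => le_trans (h5 x hx) (by omega)⟩
  | succ m ih =>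
    intro k id a T h
    have htb : ∀ g a' T', (g, a', T') ∈ hatSeq su i1 m → ∀ x ∈ T', wt x ≤ i1 + 1 := by
      intro g a' T' hm x hx
      match g with
      | .inl s =>
        obtain ⟨s', rfl⟩ := (L1H su i1 m s a' T' hm).2 x hx
        simp [wt]
      | .inr (c, id') => exact (ih c id' a' T' hm).2.2.2.2 x hx
    rcases h with (h | h) | h
    · exact ih k id a T h
    · obtain ⟨id', hdom, a', T', hprev, he⟩ := h
      simp only [Prod.ext_iff, Sum.inr.injEq] at he
      obtain ⟨hkid, rfl, rfl⟩ := he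
      obtain ⟨rfl, rfl⟩ : i1 = k ∧ id = id' := ⟨hkid.1.symm, Prod.ext hkid.2.1 hkid.2.2⟩
      obtain ⟨h1, h2, -, -, h5⟩ := ih (i1 - 1) id a T hprev
      exact ⟨by omega, le_refl _, fun hlt => absurd hlt (lt_irrefl i1), fun _ => hdom, h5⟩
    · obtain ⟨id', hdom, b, S, f, hS, hcl, he⟩ := h
      simp only [Prod.ext_iff, Sum.inr.injEq] at he
      obtain ⟨hkid, rfl, rfl⟩ := he
      obtain ⟨rfl, rfl⟩ : i1 = k ∧ id = id' := ⟨hkid.1.symm, Prod.ext hkid.2.1 hkid.2.2⟩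
      have hi1 : 1 ≤ i1 := by
        rcases Nat.eq_zero_or_pos i1 with rfl | h'
        · exact absurd hdom (by simp [stage])
        · exact h'
      refine ⟨hi1, le_refl _, fun hlt => absurd hlt (lt_irrefl i1), fun _ => hdom, ?_⟩
      intro x hx
      simp only [Set.mem_iUnion] at hx
      obtain ⟨e, heS, hx⟩ := hx
      obtain ⟨S₀, hS₀, rfl⟩ := hS
      obtain ⟨e₀, he₀, rfl⟩ := heS
      have hrb : wt (refOf (substElem i1 (i1 - 1) e₀)) ≤ i1 + 1 := by
        rw [refOf_subst]
        rcases hat_rec_ref hS₀ e₀ he₀ with ⟨s, hr⟩ | ⟨id'', hr⟩ <;> rw [hr]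
        · simp [substGQ, wt]
        · simp [substGQ, wt]
      have hc := hcl _ (Set.mem_image_of_mem _ he₀)
      match e₀ with
      | .ref θ₀ =>
        exact htb _ _ _ hc x hx
      | .push a' w' θ₀ =>
        obtain ⟨-, hw⟩ := hc
        refine wrun_bound htb hw ?_ x hx
        intro y hy
        rcases hy with rfl
        exact hrb

lemma hat_low (su : Setup α P Q σB) (i1 : ℕ) {m g a T}
    (h : (g, a, T) ∈ hatSeq su i1 m) (hg : wt g ≤ i1) :
    (g, a, T) ∈ (stage su i1).Δ1 ∧ ∀ x ∈ T, wt x ≤ i1 := by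
  match g with
  | .inl s =>
    obtain ⟨h1, h2⟩ := L1H su i1 m s a T h
    refine ⟨stage_mono_Δ1 su (Nat.zero_le i1) h1, fun x hx => ?_⟩
    obtain ⟨s', rfl⟩ := h2 x hx
    simp [wt]
  | .inr (c, id') =>
    have hc : c < i1 := by simp [wt] at hg; omega
    obtain ⟨-, -, h3, -, -⟩ := L2H su i1 m c id' a T h
    have hm := h3 hc
    obtain ⟨-, -, -, -, h5⟩ := L2a su c c id' a T hm
    exact ⟨stage_mono_Δ1 su hc.le hm, fun x hx => le_trans (h5 x hx) (by omega)⟩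

lemma low_run (su : Setup α P Q σB) (i1 : ℕ) {m w S T}
    (h : wrun (hatSeq su i1 m) w S T) :
    (∀ x ∈ S, wt x ≤ i1) → wrun ((stage su i1).Δ1) w S T ∧ ∀ x ∈ T, wt x ≤ i1 := by
  induction h with
  | nil S => exact fun hS => ⟨.nil S, hS⟩
  | @cons a w S S1 S2 hs hr ih =>
    intro hS
    obtain ⟨f, hf, rfl⟩ := hs
    have hlow : ∀ x ∈ ⋃ g ∈ S, f g, wt x ≤ i1 := by
      intro x hx
      simp only [Set.mem_iUnion] at hx
      obtain ⟨g, hg, hxg⟩ := hx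
      exact (hat_low su i1 (hf g hg) (hS g hg)).2 x hxg
    have hstep : wstep ((stage su i1).Δ1) a S (⋃ g ∈ S, f g) :=
      ⟨f, fun g hg => (hat_low su i1 (hf g hg) (hS g hg)).1, rfl⟩
    obtain ⟨hw, hT⟩ := ih hlow
    exact ⟨.cons hstep hw, hT⟩

lemma lift_trans (su : Setup α P Q σB) {k : ℕ} {id : Ident Q} {a : α}
    {T : Set (GQ σB Q)} (h : (Sum.inr (k, id), a, T) ∈ (stage su k).Δ1)
    (hd : id ∈ (stage su k).gdom) :
    ∀ j, k ≤ j → (Sum.inr (j, id), a, T) ∈ (stage su j).Δ1 := by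
  intro j hj
  induction j, hj using Nat.le_induction with
  | base => exact h
  | succ j hj ih =>
    refine Or.inl (Or.inr ⟨id, Or.inl (stage_mono_gdom su hj hd), a, T, ?_, rfl⟩)
    simpa using ih

lemma hat_stab [Finite α] [Finite σB] [Finite Q] (su : Setup α P Q σB) (i1 : ℕ) :
    ∃ m0, ∀ m, hatSeq su i1 m ⊆ hatSeq su i1 m0 := by
  classical
  set W : Set (GQ σB Q) := {x | wt x ≤ i1 + 1} with hWdef
  have hW := wt_fin (σB := σB) (Q := Q) (i1 + 1)
  have hAmb : ∀ m, hatSeq su i1 m ⊆ W ×ˢ (Set.univ ×ˢ {T | T ⊆ W}) := by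
    intro m t ht
    obtain ⟨g, a, T⟩ := t
    refine ⟨?_, trivial, ?_⟩
    · match g with
      | .inl s => show wt (Sum.inl s : GQ σB Q) ≤ i1 + 1; simp [wt]
      | .inr (c, id') =>
        have := (L2H su i1 m c id' a T ht).2.1
        show wt (Sum.inr (c, id') : GQ σB Q) ≤ i1 + 1
        simp [wt]; omega
    · intro x hx
      match g with
      | .inl s =>
        obtain ⟨s', rfl⟩ := (L1H su i1 m s a T ht).2 x hx
        show wt (Sum.inl s' : GQ σB Q) ≤ i1 + 1
        simp [wt]
      | .inr (c, id') => exact (L2H su i1 m c id' a T ht).2.2.2.2 x hx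
  have hfin : (⋃ m, hatSeq su i1 m).Finite :=
    Set.Finite.subset (hW.prod (Set.finite_univ.prod hW.finite_subsets))
      (Set.iUnion_subset hAmb)
  have hev : ∀ t ∈ ⋃ m, hatSeq su i1 m, ∃ n, ∀ k, n ≤ k → t ∈ hatSeq su i1 k := by
    intro t ht
    obtain ⟨m, hm⟩ := Set.mem_iUnion.mp ht
    exact ⟨m, fun k hk => hat_mono su i1 hk hm⟩
  obtain ⟨m0, hm0⟩ := fmax hfin hev
  exact ⟨m0, fun m t ht => hm0 t (Set.mem_iUnion.mpr ⟨m, ht⟩) m0 (le_refl _)⟩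

end Hat
section Down

variable {α P Q σB : Type}

/-- collapse of superscripts `≥ i1` to `i1` -/
def cmap (i1 : ℕ) : GQ σB Q → GQ σB Q
  | .inl s => .inl s
  | .inr (k, id) => .inr (min k i1, id)

lemma cmap_fix {i1 : ℕ} {x : GQ σB Q} (h : wt x ≤ i1 + 1) : cmap i1 x = x := by
  match x with
  | .inl s => rfl
  | .inr (k, id) =>
    have : k ≤ i1 := by simp [wt] at h; omega
    simp [cmap, Nat.min_eq_left this]

/-- simulation of runs along a state map -/
lemma sim {Δ Δ' : Trans1 α σB Q} {φ : GQ σB Q → GQ σB Q}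
    (hD : ∀ g a T, (g, a, T) ∈ Δ → ∃ T', T' ⊆ φ '' T ∧ (φ g, a, T') ∈ Δ')
    {w S T} (h : wrun Δ w S T) :
    ∀ S₂ ⊆ φ '' S, ∃ T₂, T₂ ⊆ φ '' T ∧ wrun Δ' w S₂ T₂ := by
  classical
  induction h with
  | nil S => exact fun S₂ h₂ => ⟨S₂, h₂, .nil S₂⟩
  | @cons a w S S1 S2 hs hr ih =>
    obtain ⟨f, hf, rfl⟩ := hs
    intro S₂ hS₂
    have hx : ∀ x₂ ∈ S₂, ∃ T', T' ⊆ φ '' (⋃ g ∈ S, f g) ∧ (x₂, a, T') ∈ Δ' := by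
      intro x₂ h₂
      obtain ⟨x, hxS, rfl⟩ := hS₂ h₂
      obtain ⟨T', hsub, hmem⟩ := hD _ _ _ (hf x hxS)
      exact ⟨T', hsub.trans (Set.image_mono (Set.subset_biUnion_of_mem hxS)), hmem⟩
    choose! F hF1 hF2 using hx
    have hstep : wstep Δ' a S₂ (⋃ x₂ ∈ S₂, F x₂) := ⟨F, hF2, rfl⟩
    have hsub : (⋃ x₂ ∈ S₂, F x₂) ⊆ φ '' (⋃ g ∈ S, f g) := by
      intro y hy
      simp only [Set.mem_iUnion] at hy
      obtain ⟨x₂, hx₂, hyx⟩ := hy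
      exact hF1 x₂ hx₂ hyx
    obtain ⟨T₂, h1, h2⟩ := ih _ hsub
    exact ⟨T₂, h1, .cons hstep h2⟩

lemma down (su : Setup α P Q σB) (i1 : ℕ) (hfix : ∀ i, i1 ≤ i → SimeqAt su i1 i) :
    ∀ m g a T, (g, a, T) ∈ (stage su (i1 + m)).Δ1 →
      ∃ T', T' ⊆ cmap i1 '' T ∧ (cmap i1 g, a, T') ∈ hatSeq su i1 m := by
  intro m
  induction m with
  | zero =>
    intro g a T h
    rw [Nat.add_zero] at h
    have hfixg : cmap i1 g = g := by
      match g with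
      | .inl s => rfl
      | .inr (k, id) =>
        have := (L2a su i1 k id a T h).2.1
        exact cmap_fix (by simp [wt]; omega)
    have hfixT : ∀ x ∈ T, cmap i1 x = x := by
      intro x hx
      match g with
      | .inl s =>
        obtain ⟨s', rfl⟩ := (L1a su i1 s a T h).2 x hx
        rfl
      | .inr (k, id) =>
        obtain ⟨-, hk, -, -, h5⟩ := L2a su i1 k id a T h
        exact cmap_fix (le_trans (h5 x hx) (by omega))
    refine ⟨T, fun x hx => ⟨x, hx, hfixT x hx⟩, ?_⟩
    rw [hfixg]
    exact h
  | succ m ih =>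
    intro g a T h
    rcases h with (h | h) | h
    · obtain ⟨T', h1, h2⟩ := ih g a T h
      exact ⟨T', h1, TG_subset h2⟩
    · -- inherited at stage i1+m+1
      obtain ⟨id, hdom, a', T', hprev, he⟩ := h
      obtain ⟨hg, ha, hT⟩ : g = Sum.inr (i1 + m + 1, id) ∧ a = a' ∧ T = T' := by
        simpa [Prod.ext_iff] using he
      subst hT; subst ha; subst hg
      have hp : (Sum.inr (i1 + m, id), a, T) ∈ (stage su (i1 + m)).Δ1 := by
        simpa using hprev
      obtain ⟨T₂, h1, h2⟩ := ih _ _ _ hp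
      refine ⟨T₂, h1, ?_⟩
      have h3 : cmap i1 (Sum.inr (i1 + m, id) : GQ σB Q) = Sum.inr (i1, id) := by
        show (Sum.inr (min (i1 + m) i1, id) : GQ σB Q) = _
        rw [Nat.min_eq_right (by omega)]
      have h4 : cmap i1 (Sum.inr (i1 + m + 1, id) : GQ σB Q) = Sum.inr (i1, id) := by
        show (Sum.inr (min (i1 + m + 1) i1, id) : GQ σB Q) = _
        rw [Nat.min_eq_right (by omega)]
      rw [h4]; rw [h3] at h2
      exact TG_subset h2
    · -- new at stage i1+m+1
      obtain ⟨id, hdom, b, S, f, hS, hcl, he⟩ := h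
      obtain ⟨hg, ha, hT⟩ : g = Sum.inr (i1 + m + 1, id) ∧ a = b ∧ T = ⋃ e ∈ S, f e := by
        simpa [Prod.ext_iff] using he
      subst hT; subst ha; subst hg
      classical
      have hgd : id ∈ (stage su i1).gdom := by
        have hh := (hfix (i1 + m + 1) (by omega)).1
        rw [← hh]
        exact hdom
      have hS' : S ∈ (stage su (i1 + m + 1)).recipes id := hS
      have hrec := (hfix (i1 + m + 1) (by omega)).2 id
        (show id ∈ (stage su (i1 + m + 1)).gdom from hdom)
      have hS₀ : substS (i1 - 1) (i1 + m) S ∈ (stage su i1).recipes id := by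
        have := hrec.1 S hS'
        simpa using this
      set S' : Set (Elem α σB Q) := substS i1 (i1 - 1) (substS (i1 - 1) (i1 + m) S)
        with hS'def
      have hSmem : S' ∈ substS i1 (i1 - 1) '' (stage su i1).recipes id :=
        ⟨_, hS₀, rfl⟩
      have hrr := rec_ref (st := stage su (i1 + m)) (q := id.1) (Qs := id.2) hS
      have hE : ∀ e' ∈ S', ∃ U, ElemClause (hatSeq su i1 m) a e' U ∧
          U ⊆ cmap i1 '' (⋃ e ∈ S, f e) := by
        rintro e' ⟨e₁, ⟨e, heS, rfl⟩, rfl⟩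
        have hsub : ∀ θ : GQ σB Q,
            ((∃ s, θ = Sum.inl s) ∨ ∃ id', θ = Sum.inr (i1 + m, id')) →
            substGQ i1 (i1 - 1) (substGQ (i1 - 1) (i1 + m) θ) = cmap i1 θ := by
          rintro θ (⟨s, rfl⟩ | ⟨id', rfl⟩)
          · rfl
          · simp [substGQ, cmap]
        have hcl' := hcl e heS
        have hfsub : f e ⊆ ⋃ e ∈ S, f e := Set.subset_biUnion_of_mem heS
        match e, heS, hcl', hfsub with
        | .ref θ, heS, hcl', hfsub =>
          have hrθ : (∃ s, θ = Sum.inl s) ∨ ∃ id', θ = Sum.inr (i1 + m, id') := by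
            simpa [refOf] using hrr _ heS
          obtain ⟨U, h1, h2⟩ := ih θ a _ hcl'
          refine ⟨U, ?_, h1.trans (Set.image_mono hfsub)⟩
          show ElemClause _ a
            (Elem.ref (substGQ i1 (i1 - 1) (substGQ (i1 - 1) (i1 + m) θ))) U
          rw [hsub θ hrθ]
          exact h2
        | .push a'' w'' θ, heS, hcl', hfsub =>
          have hrθ : (∃ s, θ = Sum.inl s) ∨ ∃ id', θ = Sum.inr (i1 + m, id') := by
            simpa [refOf] using hrr _ heS
          obtain ⟨hb, hw⟩ := hcl'
          obtain ⟨U, h1, h2⟩ := sim ih hw {cmap i1 θ} (by simp)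
          refine ⟨U, ?_, h1.trans (Set.image_mono hfsub)⟩
          show ElemClause _ a
            (Elem.push a'' w'' (substGQ i1 (i1 - 1) (substGQ (i1 - 1) (i1 + m) θ))) U
          rw [hsub θ hrθ]
          exact ⟨hb, h2⟩
      choose! f' hf1 hf2 using hE
      refine ⟨⋃ e' ∈ S', f' e', ?_, ?_⟩
      · intro y hy
        simp only [Set.mem_iUnion] at hy
        obtain ⟨e', he', hye⟩ := hy
        exact hf2 e' he' hye
      · have h4 : cmap i1 (Sum.inr (i1 + m + 1, id) : GQ σB Q) = Sum.inr (i1, id) := by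
          show (Sum.inr (min (i1 + m + 1) i1, id) : GQ σB Q) = _
          rw [Nat.min_eq_right (by omega)]
        rw [h4]
        exact Or.inr ⟨id, hgd, a, S', f', hSmem, hf1, rfl⟩

end Down
section Up

variable {α P Q σB : Type}

/-- coupling between a concrete-stage state set and a hat state set -/
def Coup (i1 n : ℕ) (S S' : Set (GQ σB Q)) : Prop :=
  ∀ x ∈ S, (x ∈ S' ∧ wt x ≤ i1) ∨
    ∃ k id', x = Sum.inr (k, id') ∧ (Sum.inr (i1, id') : GQ σB Q) ∈ S' ∧ n ≤ k

lemma Coup_mono_right {i1 n : ℕ} {S S' S'' : Set (GQ σB Q)}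
    (h : Coup i1 n S S') (hs : S' ⊆ S'') : Coup i1 n S S'' := by
  intro x hx
  rcases h x hx with ⟨h1, h2⟩ | ⟨k, id', rfl, h1, h2⟩
  · exact Or.inl ⟨hs h1, h2⟩
  · exact Or.inr ⟨k, id', rfl, hs h1, h2⟩

def Astmt (su : Setup α P Q σB) (i1 m : ℕ) : Prop :=
  ∀ id a T', (Sum.inr (i1, id), a, T') ∈ hatSeq su i1 m →
    ∀ n, ∃ K, ∀ k, K ≤ k →
      ∃ T, (Sum.inr (k, id), a, T) ∈ (stage su k).Δ1 ∧ Coup i1 n T T'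

def Bstmt (su : Setup α P Q σB) (i1 m : ℕ) : Prop :=
  ∀ w S' T', wrun (hatSeq su i1 m) w S' T' → (∀ x ∈ S', wt x ≤ i1 + 1) →
    ∀ n, ∃ N, ∀ j S, i1 ≤ j → Coup i1 N S S' → (∀ x ∈ S, wt x ≤ j + 1) →
      ∃ T, wrun (stage su j).Δ1 w S T ∧ Coup i1 n T T' ∧ ∀ x ∈ T, wt x ≤ j + 1

lemma A0 (su : Setup α P Q σB) (i1 : ℕ) : Astmt su i1 0 := by
  intro id a T' h n
  obtain ⟨h1, h2, hgd, hst, h5⟩ := L2a su i1 i1 id a T' h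
  exact ⟨i1, fun k hk =>
    ⟨T', lift_trans su hst hgd k hk, fun x hx => Or.inl ⟨hx, h5 x hx⟩⟩⟩

lemma BofA [Finite σB] [Finite Q] (su : Setup α P Q σB) (i1 : ℕ) {m : ℕ}
    (hA : Astmt su i1 m) : Bstmt su i1 m := by
  classical
  intro w S' T' hrun
  induction hrun with
  | nil S' => exact fun hS' n => ⟨n, fun j S hj hc hb => ⟨S, .nil S, hc, hb⟩⟩
  | @cons a w S' S1' S2' hs hr ih =>
    intro hS' n
    obtain ⟨f, hf, rfl⟩ := hs
    have htb : ∀ x' ∈ S', ∀ x ∈ f x', wt x ≤ i1 + 1 := by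
      intro x' hx' x hx
      match x' with
      | .inl s =>
        obtain ⟨s', rfl⟩ := (L1H su i1 m s a (f _) (hf _ hx')).2 x hx
        simp [wt]
      | .inr (c, id') => exact (L2H su i1 m c id' a (f _) (hf _ hx')).2.2.2.2 x hx
    have hS1' : ∀ x ∈ ⋃ x' ∈ S', f x', wt x ≤ i1 + 1 := by
      intro x hx
      simp only [Set.mem_iUnion] at hx
      obtain ⟨x', hx', hxx⟩ := hx
      exact htb x' hx' x hxx
    obtain ⟨N1, hN1⟩ := ih hS1' n
    have hS'fin : S'.Finite := (wt_fin (i1 + 1)).subset hS'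
    have hAx : ∀ x' ∈ S', ∃ K, ∀ k, K ≤ k → ∀ id', x' = Sum.inr (i1, id') →
        ∃ T, (Sum.inr (k, id'), a, T) ∈ (stage su k).Δ1 ∧ Coup i1 N1 T (f x') := by
      intro x' hx'
      by_cases hx'eq : ∃ id', x' = Sum.inr (i1, id')
      · obtain ⟨id', rfl⟩ := hx'eq
        obtain ⟨K, hK⟩ := hA id' a (f _) (hf _ hx') N1
        refine ⟨K, fun k hk id'' he => ?_⟩
        obtain rfl : id'' = id' := by
          have := (Sum.inr.injEq _ _).mp he
          exact (Prod.ext_iff.mp this).2.symm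
        exact hK k hk
      · exact ⟨0, fun k hk id' he => absurd ⟨id', he⟩ hx'eq⟩
    obtain ⟨K₀, hK₀⟩ := fmax hS'fin hAx
    refine ⟨max K₀ N1, fun j S hj hc hb => ?_⟩
    have hstep : ∀ x ∈ S, ∃ U, (x, a, U) ∈ (stage su j).Δ1 ∧
        Coup i1 N1 U (⋃ x' ∈ S', f x') ∧ ∀ y ∈ U, wt y ≤ j + 1 := by
      intro x hx
      rcases hc x hx with ⟨hxS', hlow⟩ | ⟨k', id'', rfl, hmem, hk'⟩
      · obtain ⟨h1, h2⟩ := hat_low su i1 (hf x hxS') hlow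
        refine ⟨f x, stage_mono_Δ1 su hj h1, ?_,
          fun y hy => le_trans (h2 y hy) (by omega)⟩
        intro y hy
        exact Or.inl ⟨Set.mem_biUnion hxS' hy, h2 y hy⟩
      · obtain ⟨T, hT1, hT2⟩ := hK₀ _ hmem k' (le_trans (le_trans (le_max_left _ _) hk') le_rfl)
          id'' rfl
        have hk'j : k' ≤ j := by
          have := hb _ hx
          simp [wt] at this
          omega
        obtain ⟨-, -, -, -, h5⟩ := L2a su k' k' id'' a T hT1
        refine ⟨T, stage_mono_Δ1 su hk'j hT1,
          Coup_mono_right hT2 (Set.subset_biUnion_of_mem hmem),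
          fun y hy => le_trans (h5 y hy) (by omega)⟩
    choose! F hF1 hF2 hF3 using hstep
    have hcu : Coup i1 N1 (⋃ x ∈ S, F x) (⋃ x' ∈ S', f x') := by
      intro y hy
      simp only [Set.mem_iUnion] at hy
      obtain ⟨x, hx, hyx⟩ := hy
      exact hF2 x hx y hyx
    have hbu : ∀ y ∈ ⋃ x ∈ S, F x, wt y ≤ j + 1 := by
      intro y hy
      simp only [Set.mem_iUnion] at hy
      obtain ⟨x, hx, hyx⟩ := hy
      exact hF3 x hx y hyx
    obtain ⟨T, hTr, hTc, hTb⟩ := hN1 j (⋃ x ∈ S, F x) hj hcu hbu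
    exact ⟨T, .cons ⟨F, hF1, rfl⟩ hTr, hTc, hTb⟩

end Up
section Asucc

variable {α P Q σB : Type}

lemma substGQ_low (j i : ℕ) (s : σB) :
    substGQ j i (Sum.inl s : GQ σB Q) = Sum.inl s := rfl

lemma substGQ_hit (j i : ℕ) (id : Ident Q) :
    substGQ j i (Sum.inr (i, id) : GQ σB Q) = Sum.inr (j, id) := by
  simp [substGQ]

lemma Asucc [Finite σB] [Finite Q] (su : Setup α P Q σB) (i1 : ℕ)
    (hfix : ∀ i, i1 ≤ i → SimeqAt su i1 i)
    (hOPfin : ∀ x ∈ su.D, x.2.2.Finite) {m : ℕ}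
    (hA : Astmt su i1 m) (hB : Bstmt su i1 m) : Astmt su i1 (m + 1) := by
  classical
  intro id a T' hmem n
  rcases hmem with (h | h) | h
  · exact hA id a T' h n
  · -- inherited transition
    obtain ⟨id', hdom, a', T'', hprev, he⟩ := h
    obtain ⟨hg, ha, hT⟩ : (Sum.inr (i1, id) : GQ σB Q) = Sum.inr (i1, id') ∧
        a = a' ∧ T' = T'' := by simpa [Prod.ext_iff] using he
    obtain rfl : id = id' := by
      have := (Sum.inr.injEq _ _).mp hg
      exact (Prod.ext_iff.mp this).2
    subst hT; subst ha
    obtain ⟨h1, h2, h3, -, -⟩ := L2H su i1 m (i1 - 1) id a T' hprev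
    have hlt : i1 - 1 < i1 := by omega
    have hst := h3 hlt
    obtain ⟨-, -, hgd, -, h5⟩ := L2a su (i1 - 1) (i1 - 1) id a T' hst
    refine ⟨i1 - 1, fun k hk => ?_⟩
    refine ⟨T', lift_trans su hst hgd k hk, fun x hx => Or.inl ⟨hx, ?_⟩⟩
    exact le_trans (h5 x hx) (by omega)
  · -- new transition
    obtain ⟨id', hdom, b, S', f', hS', hcl', he⟩ := h
    obtain ⟨hg, ha, hT⟩ : (Sum.inr (i1, id) : GQ σB Q) = Sum.inr (i1, id') ∧
        a = b ∧ T' = ⋃ e' ∈ S', f' e' := by simpa [Prod.ext_iff] using he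
    obtain rfl : id = id' := by
      have := (Sum.inr.injEq _ _).mp hg
      exact (Prod.ext_iff.mp this).2
    subst hT; subst ha
    obtain ⟨S₀, hS₀, rfl⟩ := hS'
    have hi1 : 1 ≤ i1 := by
      rcases Nat.eq_zero_or_pos i1 with rfl | h'
      · exact absurd hdom (by simp [stage])
      · exact h'
    have hfin : S₀.Finite := by
      match i1, hS₀ with
      | nn + 1, hS₀ => exact rec_fin hOPfin (show S₀ ∈ NewRec su nn (stage su nn) id.1 id.2 from hS₀)
    -- per-element matching, eventually in j
    have hEl : ∀ e₀ ∈ S₀, ∃ K, ∀ j, K ≤ j →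
        ∃ U, ElemClause (stage su j).Δ1 a (substElem j (i1 - 1) e₀) U ∧
          Coup i1 n U (f' (substElem i1 (i1 - 1) e₀)) := by
      intro e₀ he₀
      have href := hat_rec_ref hS₀ e₀ he₀
      have hcl'' := hcl' _ (Set.mem_image_of_mem _ he₀)
      match e₀, he₀, href, hcl'' with
      | .ref θ₀, he₀, href, hcl'' =>
        rcases href with ⟨s, hr⟩ | ⟨id'', hr⟩ <;>
          rw [show refOf (Elem.ref θ₀) = θ₀ from rfl] at hr <;> subst hr
        · -- low reference
          have hmem' : (Sum.inl s, a, f' (Elem.ref (Sum.inl s))) ∈ hatSeq su i1 m := by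
            simpa [substElem, substGQ, ElemClause] using hcl''
          obtain ⟨hlb, hinl⟩ := L1H su i1 m s a _ hmem'
          refine ⟨0, fun j hj => ?_⟩
          refine ⟨f' (Elem.ref (Sum.inl s)), ?_, ?_⟩
          · show ElemClause _ a (Elem.ref (substGQ j (i1-1) (Sum.inl s))) _
            rw [substGQ_low]
            exact stage_mono_Δ1 su (Nat.zero_le j) hlb
          · have heq : substElem i1 (i1-1) (Elem.ref (Sum.inl s)) =
                (Elem.ref (Sum.inl s) : Elem α σB Q) := rfl
            rw [heq]
            intro x hx
            obtain ⟨s', rfl⟩ := hinl x hx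
            exact Or.inl ⟨hx, by simp [wt]⟩
        · -- high reference
          have hmem' : (Sum.inr (i1, id''), a, f' (substElem i1 (i1-1)
              (Elem.ref (Sum.inr (i1 - 1, id''))))) ∈ hatSeq su i1 m := by
            simpa [substElem, substGQ, ElemClause] using hcl''
          obtain ⟨K, hK⟩ := hA id'' a _ hmem' n
          refine ⟨K, fun j hj => ?_⟩
          obtain ⟨T, hT1, hT2⟩ := hK j hj
          refine ⟨T, ?_, hT2⟩
          show ElemClause _ a (Elem.ref (substGQ j (i1-1) (Sum.inr (i1-1, id'')))) _
          rw [substGQ_hit]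
          exact hT1
      | .push a₀ w₀ θ₀, he₀, href, hcl'' =>
        rcases href with ⟨s, hr⟩ | ⟨id'', hr⟩ <;>
          rw [show refOf (Elem.push a₀ w₀ θ₀) = θ₀ from rfl] at hr <;> subst hr
        · -- low reference
          obtain ⟨ha₀, hw⟩ : a = a₀ ∧ wrun (hatSeq su i1 m) w₀ {Sum.inl s}
              (f' (substElem i1 (i1-1) (Elem.push a₀ w₀ (Sum.inl s)))) := by
            simpa [substElem, substGQ, ElemClause] using hcl''
          obtain ⟨hrun, hlow⟩ := low_run su i1 hw
            (by rintro x rfl; simp [wt])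
          refine ⟨i1, fun j hj => ?_⟩
          refine ⟨f' (substElem i1 (i1-1) (Elem.push a₀ w₀ (Sum.inl s))), ?_, ?_⟩
          · show ElemClause _ a (Elem.push a₀ w₀ (substGQ j (i1-1) (Sum.inl s))) _
            rw [substGQ_low]
            exact ⟨ha₀, wrun_mono (stage_mono_Δ1 su hj) hrun⟩
          · intro x hx
            exact Or.inl ⟨hx, hlow x hx⟩
        · -- high reference
          obtain ⟨ha₀, hw⟩ : a = a₀ ∧ wrun (hatSeq su i1 m) w₀ {Sum.inr (i1, id'')}
              (f' (substElem i1 (i1-1) (Elem.push a₀ w₀ (Sum.inr (i1-1, id''))))) := by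
            simpa [substElem, substGQ, ElemClause] using hcl''
          obtain ⟨N, hN⟩ := hB w₀ _ _ hw
            (by rintro x rfl; simp [wt]) n
          refine ⟨max N i1, fun j hj => ?_⟩
          obtain ⟨T, hr2, hc2, -⟩ := hN j {Sum.inr (j, id'')} (le_trans (le_max_right _ _) hj)
            (by
              rintro x rfl
              exact Or.inr ⟨j, id'', rfl, rfl, le_trans (le_max_left _ _) hj⟩)
            (by rintro x rfl; simp [wt])
          refine ⟨T, ?_, hc2⟩
          show ElemClause _ a (Elem.push a₀ w₀ (substGQ j (i1-1) (Sum.inr (i1-1, id'')))) _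
          rw [substGQ_hit]
          exact ⟨ha₀, hr2⟩
    obtain ⟨K₀, hK₀⟩ := fmax hfin hEl
    refine ⟨max (K₀ + 1) (i1 + 1), fun k hk => ?_⟩
    obtain ⟨k', rfl⟩ : ∃ k', k = k' + 1 := ⟨k - 1, by omega⟩
    have hk' : K₀ ≤ k' := by omega
    have hk'i : i1 ≤ k' := by omega
    have hgd' : id ∈ (stage su (k' + 1)).gdom := by
      rw [(hfix (k' + 1) (by omega)).1]
      rw [(hfix i1 le_rfl).1] at hdom
      exact hdom
    have hSk : substS k' (i1 - 1) S₀ ∈ (stage su (k' + 1)).recipes id := by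
      have := ((hfix (k' + 1) (by omega)).2 id hgd').2 S₀ hS₀
      simpa using this
    have hE : ∀ e ∈ substS k' (i1 - 1) S₀, ∃ U, ElemClause (stage su k').Δ1 a e U ∧
        Coup i1 n U (⋃ e' ∈ substS i1 (i1 - 1) S₀, f' e') := by
      rintro e ⟨e₀, he₀, rfl⟩
      obtain ⟨U, h1, h2⟩ := hK₀ e₀ he₀ k' hk'
      exact ⟨U, h1, Coup_mono_right h2
        (Set.subset_biUnion_of_mem (Set.mem_image_of_mem _ he₀))⟩
    choose! fk hfk1 hfk2 using hE
    refine ⟨⋃ e ∈ substS k' (i1 - 1) S₀, fk e, ?_, ?_⟩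
    · exact Or.inr ⟨id, hgd', a, substS k' (i1 - 1) S₀, fk,
        (show substS k' (i1-1) S₀ ∈ NewRec su k' (stage su k') id.1 id.2 from hSk),
        hfk1, rfl⟩
    · intro y hy
      simp only [Set.mem_iUnion] at hy
      obtain ⟨e, he, hye⟩ := hy
      exact hfk2 e he y hye

end Asucc
section Main

variable {α P Q σB : Type}

lemma AB [Finite σB] [Finite Q] (su : Setup α P Q σB) (i1 : ℕ)
    (hfix : ∀ i, i1 ≤ i → SimeqAt su i1 i) (hOPfin : ∀ x ∈ su.D, x.2.2.Finite) :
    ∀ m, Astmt su i1 m ∧ Bstmt su i1 m := by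
  intro m
  induction m with
  | zero => exact ⟨A0 su i1, BofA su i1 (A0 su i1)⟩
  | succ m ih =>
    have hA := Asucc su i1 hfix hOPfin ih.1 ih.2
    exact ⟨hA, BofA su i1 hA⟩

lemma up_acc [Finite σB] [Finite Q] (su : Setup α P Q σB) (i1 : ℕ)
    (hfix : ∀ i, i1 ≤ i → SimeqAt su i1 i) (hOPfin : ∀ x ∈ su.D, x.2.2.Finite)
    {m : ℕ} {id : Ident Q} {w : Store1 α}
    (h : Acc1 (hatSeq su i1 m) (F1 su) (Sum.inr (i1, id)) w) :
    ∃ i', Acc1 ((stage su i').Δ1) (F1 su) (Sum.inr (i', id)) w := by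
  obtain ⟨Sf, hr, hF⟩ := h
  obtain ⟨N, hN⟩ := (AB su i1 hfix hOPfin m).2 w {Sum.inr (i1, id)} Sf hr
    (by rintro x rfl; simp [wt]) 0
  obtain ⟨T, hTr, hTc, -⟩ := hN (max N i1) {Sum.inr (max N i1, id)} (le_max_right _ _)
    (by rintro x rfl; exact Or.inr ⟨max N i1, id, rfl, rfl, le_max_left _ _⟩)
    (by rintro x rfl; simp [wt])
  refine ⟨max N i1, T, hTr, ?_⟩
  intro x hx
  rcases hTc x hx with ⟨h1, -⟩ | ⟨k, id', rfl, h1, -⟩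
  · exact hF h1
  · obtain ⟨s, hs⟩ := F1_inl (hF h1)
    exact absurd hs (by simp)

lemma down_acc (su : Setup α P Q σB) (i1 : ℕ)
    (hfix : ∀ i, i1 ≤ i → SimeqAt su i1 i) {i' : ℕ} {id : Ident Q} {w : Store1 α}
    (h : Acc1 ((stage su i').Δ1) (F1 su) (Sum.inr (i', id)) w) :
    ∃ m, Acc1 (hatSeq su i1 m) (F1 su) (Sum.inr (i1, id)) w := by
  obtain ⟨Sf, hr, hF⟩ := h
  rcases le_or_gt i1 i' with hle | hlt
  · obtain ⟨m, rfl⟩ : ∃ m, i' = i1 + m := ⟨i' - i1, by omega⟩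
    obtain ⟨T₂, h1, h2⟩ := sim (down su i1 hfix m) hr {Sum.inr (i1, id)}
      (by
        rintro x rfl
        refine ⟨Sum.inr (i1 + m, id), rfl, ?_⟩
        show (Sum.inr (min (i1 + m) i1, id) : GQ σB Q) = _
        rw [Nat.min_eq_right (by omega)])
    refine ⟨m, T₂, h2, ?_⟩
    intro x hx
    obtain ⟨y, hy, rfl⟩ := h1 hx
    obtain ⟨s, rfl⟩ := F1_inl (hF hy)
    exact hF hy
  · match w, hr with
    | [], hr =>
      cases hr
      obtain ⟨s, hs⟩ := F1_inl (hF rfl)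
      exact absurd hs (by simp)
    | a :: w', hr =>
      cases hr with
      | cons hs' hr' =>
        obtain ⟨f, hf, rfl⟩ := hs'
        have hm : (Sum.inr (i', id), a, f (Sum.inr (i', id))) ∈ (stage su i').Δ1 :=
          hf _ rfl
        obtain ⟨-, -, hgd, hst, -⟩ := L2a su i' i' id a _ hm
        have hlift := lift_trans su hst hgd i1 hlt.le
        have heq : (⋃ g ∈ ({Sum.inr (i', id)} : Set (GQ σB Q)), f g) =
            ⋃ g ∈ ({Sum.inr (i1, id)} : Set (GQ σB Q)),
              (fun _ => f (Sum.inr (i', id))) g := by simp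
        refine ⟨0, Sf, .cons ⟨fun _ => f (Sum.inr (i', id)), ?_, heq⟩ ?_, hF⟩
        · rintro g rfl
          exact hlift
        · exact wrun_mono (stage_mono_Δ1 su hlt.le) hr'

end Main
/-- Collapse at order 1.  Fix an order-2 APDS and a well-formed 2-store
multi-automaton `A_0`, with the saturation sequence and its order-1 automata
`G^0, G^1, …` and identifier sets `G̃^0, G̃^1, …`.  Suppose `G̃^i ≃ G̃^{i₁}` for all
`i ≥ i₁`, and define the fixed-state sequence `Ĝ^{i₁} = G^{i₁}`,
`Ĝ^{i+1} = T_{G̃^{i₁}[i₁/i₁-1]}(Ĝ^i)` (indexed below by the offset from `i₁`).  Then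
there exists `i₀` (= `i₁ + m₀`) such that, for every identifier `(q, Q')` and word `w`,
the following are equivalent:
(1) an accepting run `g^{i₁}_{(q,Q')} —w→ Q₁ ⊆ Q_f` exists in `Ĝ^i` for some `i`;
(2) an accepting run `g^{i₁}_{(q,Q')} —w→ Q₂ ⊆ Q_f` exists in `Ĝ^{i₀}`;
(3) an accepting run `g^{i'}_{(q,Q')} —w→ Q₃ ⊆ Q_f` exists in `G^{i'}` for some `i'`. -/
theorem order1_collapse
    (α P Q σB : Type) [Finite α] [Finite P] [Finite Q] [Finite σB]
    (su : Setup α P Q σB) (hwf : su.WF)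
    (hDfin : su.D.Finite) (hOPfin : ∀ x ∈ su.D, x.2.2.Finite)
    (i1 : ℕ) (hfix : ∀ i, i1 ≤ i → SimeqAt su i1 i) :
    ∃ m0 : ℕ, ∀ (id : Ident Q) (w : Store1 α),
      ((∃ m, Acc1 (hatSeq su i1 m) (F1 su) (Sum.inr (i1, id)) w) ↔
        Acc1 (hatSeq su i1 m0) (F1 su) (Sum.inr (i1, id)) w) ∧
      ((∃ i', Acc1 ((stage su i').Δ1) (F1 su) (Sum.inr (i', id)) w) ↔
        Acc1 (hatSeq su i1 m0) (F1 su) (Sum.inr (i1, id)) w) := by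
  obtain ⟨m0, hm0⟩ := hat_stab su i1
  refine ⟨m0, fun id w => ?_⟩
  have h12 : (∃ m, Acc1 (hatSeq su i1 m) (F1 su) (Sum.inr (i1, id)) w) ↔
      Acc1 (hatSeq su i1 m0) (F1 su) (Sum.inr (i1, id)) w := by
    constructor
    · rintro ⟨m, S, h1, h2⟩
      exact ⟨S, wrun_mono (hm0 m) h1, h2⟩
    · intro h
      exact ⟨m0, h⟩
  refine ⟨h12, ?_, ?_⟩
  · rintro ⟨i', hacc⟩
    exact h12.mp (down_acc su i1 hfix hacc)
  · intro h
    exact up_acc su i1 hfix hOPfin (m := m0) h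

end Order2
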